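/- Let k be a field, V a 2-dimensional k-vector space, G a group, and ρ : G → GL(V) a homomorphism with no G-invariant subspace other than 0 and V. Let N be a normal subgroup of G and suppose V = L₁ ⊕ L₂ where L₁, L₂ are 1-dimensional subspaces and there are characters χ₁ ≠ χ₂ : N → kˣ with ρ(h)v = χᵢ(h)·v for all h ∈ N and v ∈ Lᵢ (i = 1, 2). Then H := {g ∈ G : ρ(g)L₁ = L₁} is a subgroup of G of index 2 containing N, and ρ(g)L₁ = L₂ for every g ∈ G not in H. (This is the Clifford-theoretic core of the paper's proof that the Galois representation attached to a non-CM regular algebraic cuspidal automorphic representation of GL₂ is strongly irreducible: if the restriction to an open normal subgroup splits as two distinct characters, the representation is induced from an index-2 subgroup.) -/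

import Mathlib

/-- let `ρ` be an irreducible 2-dimensional representation of `G` whose
restriction to a normal subgroup `N` splits as a direct sum of two lines on which `N`
acts by distinct characters. Then the stabilizer of the first line is an index-2
subgroup `H` of `G` containing `N`, and every `g ∉ H` maps the first line to the
second. -/
theorem induced_from_index_two_of_two_characters
    {k V : Type*} [Field k] [AddCommGroup V] [Module k V]
    {G : Type*} [Group G]
    (hdim : Module.finrank k V = 2)
    (ρ : G →* (V ≃ₗ[k] V))
    (hirr : ∀ W : Submodule k V, (∀ g : G, ∀ v ∈ W, ρ g v ∈ W) → W = ⊥ ∨ W = ⊤)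
    (N : Subgroup G) [N.Normal]
    (L₁ L₂ : Submodule k V)
    (hL₁ : Module.finrank k L₁ = 1) (hL₂ : Module.finrank k L₂ = 1)
    (hcompl : IsCompl L₁ L₂)
    (χ₁ χ₂ : N →* kˣ) (hne : χ₁ ≠ χ₂)
    (h₁ : ∀ h : N, ∀ v ∈ L₁, ρ (h : G) v = χ₁ h • v)
    (h₂ : ∀ h : N, ∀ v ∈ L₂, ρ (h : G) v = χ₂ h • v) :
    ∃ H : Subgroup G,
      (∀ g : G, g ∈ H ↔ Submodule.map (ρ g : V →ₗ[k] V) L₁ = L₁) ∧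
      H.index = 2 ∧ N ≤ H ∧
      ∀ g : G, g ∉ H → Submodule.map (ρ g : V →ₗ[k] V) L₁ = L₂ := by
  classical
  haveI : FiniteDimensional k V := FiniteDimensional.of_finrank_eq_succ hdim
  obtain ⟨n₀, hn₀⟩ : ∃ n : N, χ₁ n ≠ χ₂ n := by
    by_contra hcon
    push_neg at hcon
    exact hne (MonoidHom.ext hcon)
  have hc : (χ₁ n₀ : k) ≠ (χ₂ n₀ : k) := fun h => hn₀ (Units.ext h)
  -- lines with equal rank and containment are equal
  have hline : ∀ (L L' : Submodule k V), Module.finrank k L = 1 →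
      Module.finrank k L' = 1 → L ≤ L' → L = L' := fun L L' h h' hle =>
    Submodule.eq_of_le_of_finrank_eq hle (h.trans h'.symm)
  have hne12 : L₁ ≠ L₂ := by
    intro h
    have h2 : L₂ = ⊥ := by
      have := hcompl.disjoint
      rw [h] at this
      exact disjoint_self.mp this
    rw [h2] at hL₂; simp at hL₂
  -- functoriality of map
  have hmul : ∀ (g h : G) (L : Submodule k V),
      Submodule.map (ρ (g * h) : V →ₗ[k] V) L = Submodule.map (ρ g : V →ₗ[k] V) (Submodule.map (ρ h : V →ₗ[k] V) L) := by
    intro g h L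
    ext x
    simp only [Submodule.mem_map, map_mul]
    constructor
    · rintro ⟨y, hy, rfl⟩
      exact ⟨ρ h y, ⟨y, hy, rfl⟩, rfl⟩
    · rintro ⟨y, ⟨z, hz, rfl⟩, rfl⟩
      exact ⟨z, hz, rfl⟩
  have hone : ∀ L : Submodule k V, Submodule.map (ρ 1 : V →ₗ[k] V) L = L := by
    intro L
    ext x
    simp only [Submodule.mem_map, map_one]
    constructor
    · rintro ⟨y, hy, rfl⟩; simpa using hy
    · intro hx; exact ⟨x, hx, rfl⟩
  -- key: any ρ n₀-scalar line equals L₁ or L₂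
  have key : ∀ (L : Submodule k V), Module.finrank k L = 1 →
      (∃ c : k, ∀ w ∈ L, ρ (n₀ : G) w = c • w) → L = L₁ ∨ L = L₂ := by
    rintro L hL ⟨c, hcw⟩
    have hLbot : L ≠ ⊥ := by intro h; rw [h] at hL; simp at hL
    obtain ⟨w, hwL, hw0⟩ := Submodule.exists_mem_ne_zero_of_ne_bot hLbot
    obtain ⟨w₁, w₂, hw₁, hw₂, hsum⟩ :=
      Submodule.codisjoint_iff_exists_add_eq.mp hcompl.codisjoint w
    have heq : c • w₁ + c • w₂ = (χ₁ n₀ : k) • w₁ + (χ₂ n₀ : k) • w₂ := by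
      have hact : ρ (n₀ : G) w = (χ₁ n₀ : k) • w₁ + (χ₂ n₀ : k) • w₂ := by
        rw [← hsum, map_add, h₁ n₀ w₁ hw₁, h₂ n₀ w₂ hw₂, Units.smul_def, Units.smul_def]
      rw [← smul_add, hsum, ← hact]
      exact (hcw w hwL).symm
    have hzero : (c - (χ₁ n₀ : k)) • w₁ = -((c - (χ₂ n₀ : k)) • w₂) := by
      linear_combination (norm := module) heq
    have hmem : (c - (χ₁ n₀ : k)) • w₁ ∈ L₁ ⊓ L₂ := by
      constructor
      · exact Submodule.smul_mem _ _ hw₁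
      · rw [hzero]; exact Submodule.neg_mem _ (Submodule.smul_mem _ _ hw₂)
    rw [hcompl.inf_eq_bot, Submodule.mem_bot] at hmem
    have hmem2 : (c - (χ₂ n₀ : k)) • w₂ = 0 := by
      have := hzero
      rw [hmem] at this
      simpa using this.symm
    have hwspan : ∀ L' : Submodule k V, Module.finrank k L' = 1 → w ∈ L' → L = L' := by
      intro L' hL' hwL'
      have h1 : Submodule.span k {w} ≤ L := by
        rw [Submodule.span_le]; simpa using hwL
      have h2 : Submodule.span k {w} ≤ L' := by
        rw [Submodule.span_le]; simpa using hwL'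
      have hs : Module.finrank k (Submodule.span k {w}) = 1 :=
        finrank_span_singleton hw0
      rw [← hline _ _ hs hL h1, ← hline _ _ hs hL' h2]
    by_cases hc1 : c = (χ₁ n₀ : k)
    · have : w₂ = 0 := by
        have hne2 : c - (χ₂ n₀ : k) ≠ 0 := by
          rw [hc1]; exact sub_ne_zero.mpr hc
        exact (smul_eq_zero.mp hmem2).resolve_left hne2
      left
      exact hwspan L₁ hL₁ (by rw [← hsum, this, add_zero]; exact hw₁)
    · have : w₁ = 0 := by
        have hne1 : c - (χ₁ n₀ : k) ≠ 0 := sub_ne_zero.mpr hc1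
        exact (smul_eq_zero.mp hmem).resolve_left hne1
      right
      exact hwspan L₂ hL₂ (by rw [← hsum, this, zero_add]; exact hw₂)
  -- images of the lines are scalar lines
  have scal : ∀ (g : G) (L : Submodule k V) (χ : N →* kˣ),
      (∀ h : N, ∀ v ∈ L, ρ (h : G) v = χ h • v) →
      ∃ c : k, ∀ w ∈ Submodule.map (ρ g : V →ₗ[k] V) L, ρ (n₀ : G) w = c • w := by
    intro g L χ hχ
    have hconj : g⁻¹ * (n₀ : G) * g ∈ N := by
      have := (inferInstance : N.Normal).conj_mem _ n₀.2 g⁻¹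
      simpa using this
    refine ⟨(χ ⟨g⁻¹ * (n₀ : G) * g, hconj⟩ : kˣ), ?_⟩
    rintro w ⟨v, hv, rfl⟩
    have h1 : (n₀ : G) * g = g * (g⁻¹ * (n₀ : G) * g) := by group
    calc ρ (n₀ : G) (ρ g v) = ρ ((n₀ : G) * g) v := by rw [map_mul]; rfl
      _ = ρ g (ρ (g⁻¹ * (n₀ : G) * g) v) := by rw [h1, map_mul]; rfl
      _ = ρ g (((χ ⟨g⁻¹ * (n₀ : G) * g, hconj⟩ : kˣ) : k) • v) := by
          rw [hχ ⟨g⁻¹ * (n₀ : G) * g, hconj⟩ v hv, Units.smul_def]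
      _ = ((χ ⟨g⁻¹ * (n₀ : G) * g, hconj⟩ : kˣ) : k) • ρ g v := by
          rw [map_smul]
  have hrank : ∀ (g : G) (L : Submodule k V),
      Module.finrank k (Submodule.map (ρ g : V →ₗ[k] V) L) = Module.finrank k L :=
    fun g L => LinearEquiv.finrank_map_eq (ρ g) L
  -- dichotomy for images
  have dich₁ : ∀ g : G, Submodule.map (ρ g : V →ₗ[k] V) L₁ = L₁ ∨ Submodule.map (ρ g : V →ₗ[k] V) L₁ = L₂ :=
    fun g => key _ (by rw [hrank]; exact hL₁) (scal g L₁ χ₁ h₁)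
  have dich₂ : ∀ g : G, Submodule.map (ρ g : V →ₗ[k] V) L₂ = L₁ ∨ Submodule.map (ρ g : V →ₗ[k] V) L₂ = L₂ :=
    fun g => key _ (by rw [hrank]; exact hL₂) (scal g L₂ χ₂ h₂)
  have mapinj : ∀ g : G, Function.Injective (Submodule.map (ρ g : V →ₗ[k] V) : Submodule k V → _) :=
    fun g => Submodule.map_injective_of_injective (ρ g).injective
  -- if g swaps L₁ out, it swaps L₂ in
  have swap : ∀ g : G, Submodule.map (ρ g : V →ₗ[k] V) L₁ = L₂ → Submodule.map (ρ g : V →ₗ[k] V) L₂ = L₁ := by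
    intro g hg
    rcases dich₂ g with h | h
    · exact h
    · exact absurd (mapinj g (hg.trans h.symm)) hne12
  -- the subgroup H
  refine ⟨{ carrier := {g : G | Submodule.map (ρ g : V →ₗ[k] V) L₁ = L₁}
            one_mem' := hone L₁
            mul_mem' := by
              intro a b ha hb
              simp only [Set.mem_setOf_eq] at *
              rw [hmul, hb, ha]
            inv_mem' := by
              intro a ha
              simp only [Set.mem_setOf_eq] at *
              conv_lhs => rw [← ha]
              rw [← hmul, inv_mul_cancel, hone] }, fun g => Iff.rfl, ?_, ?_, ?_⟩
  · -- index 2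
    -- first: H ≠ ⊤
    have hnotall : ∃ g₀ : G, Submodule.map (ρ g₀ : V →ₗ[k] V) L₁ ≠ L₁ := by
      by_contra hcon
      push_neg at hcon
      rcases hirr L₁ (fun g v hv => by rw [← hcon g]; exact ⟨v, hv, rfl⟩) with h | h
      · rw [h] at hL₁; simp at hL₁
      · rw [h, finrank_top, hdim] at hL₁; exact absurd hL₁ (by norm_num)
    obtain ⟨g₀, hg₀⟩ := hnotall
    have hg₀2 : Submodule.map (ρ g₀ : V →ₗ[k] V) L₁ = L₂ := (dich₁ g₀).resolve_left hg₀
    rw [Subgroup.index_eq_two_iff]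
    refine ⟨g₀, fun b => ?_⟩
    simp only [Subgroup.mem_mk, Set.mem_setOf_eq]
    by_cases hb : Submodule.map (ρ b : V →ₗ[k] V) L₁ = L₁
    · right
      refine ⟨hb, ?_⟩
      intro h
      change Submodule.map (ρ (b * g₀) : V →ₗ[k] V) L₁ = L₁ at h
      rw [hmul, hg₀2] at h
      exact hne12 (mapinj b (h.trans hb.symm)).symm
    · left
      constructor
      · show Submodule.map (ρ (b * g₀) : V →ₗ[k] V) L₁ = L₁
        rw [hmul, hg₀2]
        exact swap b ((dich₁ b).resolve_left hb)
      · exact hb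
  · -- N ≤ H
    intro n hn
    show Submodule.map (ρ n : V →ₗ[k] V) L₁ = L₁
    have hle : Submodule.map (ρ n : V →ₗ[k] V) L₁ ≤ L₁ := by
      rintro x ⟨v, hv, rfl⟩
      show ρ n v ∈ L₁
      rw [h₁ ⟨n, hn⟩ v hv]
      exact Submodule.smul_mem _ _ hv
    exact hline _ _ (by rw [hrank]; exact hL₁) hL₁ hle
  · intro g hg
    exact (dich₁ g).resolve_left hg
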